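/- Let F be a field of characteristic zero, and x₁,…,x_k ∈ F algebraically independent over ℚ. Let x_{k+1} ∈ F be such that x₁,…,x_{k+1} are algebraically dependent over ℚ. Suppose δ is a field automorphism of F with δ(x_i) = t₀ t_i x_i for i = 1,…,k+1, where t₀,…,t_{k+1} are rational numbers such that t_i ≠ 1 for i ≥ 1 and the sets of primes ν(t_i) occurring in the numerator or denominator of t_i are pairwise disjoint and ν(t_i) ≠ ∅ for i ≥ 1. Then x_{k+1} = 0. -/

import Mathlib

/-- `ν x` is the set of primes dividing the numerator or the denominator of `x : ℚ`. -/
def nuPrimes (x : ℚ) : Set ℕ := {p : ℕ | p.Prime ∧ ((p : ℤ) ∣ x.num ∨ p ∣ x.den)}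

private lemma padicValRat_eq_zero_of_not_mem {q : ℚ} {p : ℕ} (hp : p.Prime)
    (h : p ∉ nuPrimes q) : padicValRat p q = 0 := by
  have h' : ¬ (p.Prime ∧ ((p : ℤ) ∣ q.num ∨ p ∣ q.den)) := h
  have h2 : ¬ ((p : ℤ) ∣ q.num ∨ p ∣ q.den) := fun hb => h' ⟨hp, hb⟩
  push_neg at h2
  rw [padicValRat_def, padicValInt.eq_zero_of_not_dvd h2.1,
    padicValNat.eq_zero_of_not_dvd h2.2]
  simp

private lemma padicValRat_ne_zero_of_mem {q : ℚ} (hq : q ≠ 0) {p : ℕ} [hp : Fact p.Prime]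
    (h : p ∈ nuPrimes q) : padicValRat p q ≠ 0 := by
  obtain ⟨-, hdvd⟩ := h
  have hnum : q.num ≠ 0 := Rat.num_ne_zero.2 hq
  have hp' := hp.out
  have hcop := q.reduced
  rw [Nat.Coprime] at hcop
  rcases hdvd with hdvd | hdvd
  · have h1 : p ∣ q.num.natAbs := Int.natCast_dvd.mp hdvd
    have h2 : ¬ p ∣ q.den := by
      intro hd
      have := Nat.dvd_gcd h1 hd
      rw [hcop] at this
      exact hp'.one_lt.ne' (Nat.dvd_one.mp this)
    have h3 : 1 ≤ padicValNat p q.num.natAbs :=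
      one_le_padicValNat_of_dvd (Int.natAbs_ne_zero.2 hnum) h1
    rw [padicValRat_def, padicValNat.eq_zero_of_not_dvd h2]
    unfold padicValInt
    omega
  · have h2 : ¬ p ∣ q.num.natAbs := by
      intro hd
      have := Nat.dvd_gcd hd hdvd
      rw [hcop] at this
      exact hp'.one_lt.ne' (Nat.dvd_one.mp this)
    have h3 : 1 ≤ padicValNat p q.den :=
      one_le_padicValNat_of_dvd q.pos.ne' hdvd
    rw [padicValRat_def]
    unfold padicValInt
    rw [padicValNat.eq_zero_of_not_dvd h2]
    omega

private lemma padicValRat_prod {ι : Type*} [DecidableEq ι] (s : Finset ι) (f : ι → ℚ)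
    {p : ℕ} [Fact p.Prime] (hf : ∀ i ∈ s, f i ≠ 0) :
    padicValRat p (∏ i ∈ s, f i) = ∑ i ∈ s, padicValRat p (f i) := by
  induction s using Finset.induction_on with
  | empty => simp
  | @insert a s ha ih =>
    rw [Finset.prod_insert ha, Finset.sum_insert ha,
      padicValRat.mul (hf a (Finset.mem_insert_self a s))
        (Finset.prod_ne_zero_iff.2 fun i hi => hf i (Finset.mem_insert_of_mem hi)),
      ih fun i hi => hf i (Finset.mem_insert_of_mem hi)]

private def lamAux {k : ℕ} (t : Fin (k + 2) → ℚ) (a : Fin (k + 1) →₀ ℕ) : ℚ :=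
  ∏ i, (t 0 * t i.succ) ^ a i

open MvPolynomial in
/-- Vanishing lemma: if `x₁,…,x_k` are algebraically independent over `ℚ`, `x₁,…,x_{k+1}` are
algebraically dependent over `ℚ`, and a field automorphism `δ` satisfies
`δ xᵢ = t₀ tᵢ xᵢ` with rationals `t₀,…,t_{k+1}` having pairwise disjoint prime supports,
`tᵢ ≠ 1` and `ν(tᵢ) ≠ ∅` for `i ≥ 1`, then `x_{k+1} = 0`. -/
theorem vanishing_lemma (F : Type*) [Field F] [CharZero F] (k : ℕ)
    (x : Fin (k + 1) → F)
    (hind : AlgebraicIndependent ℚ (fun i : Fin k => x i.castSucc))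
    (hdep : ¬ AlgebraicIndependent ℚ x)
    (δ : F ≃+* F) (t : Fin (k + 2) → ℚ)
    (hδ : ∀ i : Fin (k + 1), δ (x i) = ((t 0 * t i.succ : ℚ) : F) * x i)
    (ht1 : ∀ i : Fin (k + 1), t i.succ ≠ 1)
    (htν : ∀ i : Fin (k + 1), nuPrimes (t i.succ) ≠ ∅)
    (hdisj : ∀ i j : Fin (k + 2), i ≠ j → nuPrimes (t i) ∩ nuPrimes (t j) = ∅) :
    x (Fin.last k) = 0 := by
  classical
  by_contra hxlast
  have hxne : ∀ i : Fin (k + 1), x i ≠ 0 := by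
    intro i
    refine Fin.lastCases ?_ ?_ i
    · exact hxlast
    · intro j
      exact hind.ne_zero j
  have htne : ∀ i : Fin (k + 1), t 0 * t i.succ ≠ 0 := by
    intro i h
    apply hxne i
    apply δ.injective
    rw [hδ i, map_zero, h]
    simp
  have ht0 : t 0 ≠ 0 := left_ne_zero_of_mul (htne 0)
  have hts : ∀ i : Fin (k + 1), t i.succ ≠ 0 := fun i => right_ne_zero_of_mul (htne i)
  set lam : (Fin (k + 1) →₀ ℕ) → ℚ := lamAux t with hlamdef
  have hlameq : ∀ a : Fin (k + 1) →₀ ℕ, lam a = ∏ i, (t 0 * t i.succ) ^ a i :=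
    fun a => rfl
  have hlaminj : ∀ a b : (Fin (k + 1) →₀ ℕ), lam a = lam b → a = b := by
    intro a b hab
    ext i
    obtain ⟨p, hpmem⟩ := Set.nonempty_iff_ne_empty.2 (htν i)
    have hp : p.Prime := hpmem.1
    haveI : Fact p.Prime := ⟨hp⟩
    have hvt : ∀ j : Fin (k + 1), j ≠ i → padicValRat p (t j.succ) = 0 := by
      intro j hj
      refine padicValRat_eq_zero_of_not_mem hp ?_
      intro hmem
      have hd := hdisj i.succ j.succ (fun h => hj (Fin.succ_inj.mp h).symm)
      exact Set.eq_empty_iff_forall_notMem.1 hd p ⟨hpmem, hmem⟩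
    have hv0 : padicValRat p (t 0) = 0 := by
      refine padicValRat_eq_zero_of_not_mem hp ?_
      intro hmem
      have hd := hdisj i.succ 0 (Fin.succ_ne_zero i)
      exact Set.eq_empty_iff_forall_notMem.1 hd p ⟨hpmem, hmem⟩
    have hvi : padicValRat p (t i.succ) ≠ 0 := padicValRat_ne_zero_of_mem (hts i) hpmem
    have hval : ∀ c : Fin (k + 1) →₀ ℕ,
        padicValRat p (lam c) = (c i : ℤ) * padicValRat p (t i.succ) := by
      intro c
      rw [hlameq c, padicValRat_prod _ _ (fun j _ => pow_ne_zero _ (htne j))]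
      have hterm : (∑ j, padicValRat p ((t 0 * t j.succ) ^ c j))
          = ∑ j, (c j : ℤ) * padicValRat p (t j.succ) :=
        Finset.sum_congr rfl fun j _ => by
          rw [padicValRat.pow (t 0 * t j.succ), padicValRat.mul ht0 (hts j), hv0, zero_add]
      rw [hterm, Finset.sum_eq_single i (fun j _ hj => by rw [hvt j hj, mul_zero])
        (fun h => absurd (Finset.mem_univ i) h)]
    have h1 := hval a
    rw [hab, hval b] at h1
    have h2 : (a i : ℤ) = b i := mul_right_cancel₀ hvi h1.symm
    exact_mod_cast h2
  have hmonom : ∀ (a : Fin (k + 1) →₀ ℕ) (c : ℚ),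
      (aeval x) (monomial a c) = (c : F) * ∏ i, x i ^ a i := by
    intro a c
    rw [aeval_monomial, eq_ratCast (algebraMap ℚ F) c,
      Finsupp.prod_fintype _ _ fun i => pow_zero _]
  have hdel : ∀ a : Fin (k + 1) →₀ ℕ,
      δ (∏ i, x i ^ a i) = ((lam a : ℚ) : F) * ∏ i, x i ^ a i := by
    intro a
    rw [map_prod]
    have hterm : (∏ i, δ (x i ^ a i))
        = ∏ i : Fin (k + 1), ((t 0 * t i.succ : ℚ) : F) ^ a i * x i ^ a i :=
      Finset.prod_congr rfl fun i _ => by rw [map_pow, hδ i, mul_pow]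
    rw [hterm, Finset.prod_mul_distrib, hlameq a]
    push_cast
    ring
  rw [algebraicIndependent_iff] at hdep
  push_neg at hdep
  obtain ⟨P₀, hP₀0, hP₀ne⟩ := hdep
  have key : ∀ n : ℕ, ∀ P : MvPolynomial (Fin (k + 1)) ℚ,
      P.support.card ≤ n → (aeval x) P = 0 → P = 0 := by
    intro n
    induction n with
    | zero =>
      intro P hc _
      rw [Nat.le_zero, Finset.card_eq_zero, MvPolynomial.support_eq_empty] at hc
      exact hc
    | succ n ih =>
      intro P hc h0
      by_contra hne
      have hsupp : P.support.Nonempty := by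
        rw [Finset.nonempty_iff_ne_empty]
        intro h
        exact hne (MvPolynomial.support_eq_empty.mp h)
      obtain ⟨a₀, ha₀⟩ := hsupp
      rcases eq_or_lt_of_le (Finset.one_le_card.2 ⟨a₀, ha₀⟩) with h1 | h2
      · obtain ⟨a, ha⟩ := Finset.card_eq_one.1 h1.symm
        have hPe : P = monomial a (coeff a P) := by
          conv_lhs => rw [P.as_sum]
          rw [ha, Finset.sum_singleton]
        have hca : coeff a P ≠ 0 := by
          rw [← MvPolynomial.mem_support_iff, ha]
          exact Finset.mem_singleton_self a
        have hprod : ((coeff a P : ℚ) : F) * ∏ i, x i ^ a i ≠ 0 :=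
          mul_ne_zero (by exact_mod_cast hca)
            (Finset.prod_ne_zero_iff.2 fun i _ => pow_ne_zero _ (hxne i))
        apply hprod
        rw [← hmonom, ← hPe, h0]
      · obtain ⟨a₁, ha₁, hne01⟩ := Finset.exists_mem_ne h2 a₀
        set Q : MvPolynomial (Fin (k + 1)) ℚ :=
          ∑ a ∈ P.support, monomial a ((lam a - lam a₀) * coeff a P) with hQ
        have hQcoeff : ∀ b, coeff b Q =
            if b ∈ P.support then (lam b - lam a₀) * coeff b P else 0 := by
          intro b
          rw [hQ, MvPolynomial.coeff_sum]
          simp_rw [coeff_monomial]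
          exact Finset.sum_ite_eq' P.support b _
        have hQsupp : Q.support ⊆ P.support.erase a₀ := by
          intro b hb
          rw [MvPolynomial.mem_support_iff, hQcoeff] at hb
          by_cases hbP : b ∈ P.support
          · rw [if_pos hbP] at hb
            refine Finset.mem_erase.2 ⟨?_, hbP⟩
            rintro rfl
            simp at hb
          · rw [if_neg hbP] at hb
            exact absurd rfl hb
        have hQcard : Q.support.card ≤ n := by
          have hle := Finset.card_le_card hQsupp
          rw [Finset.card_erase_of_mem ha₀] at hle
          omega
        have e3 : (aeval x) P = ∑ a ∈ P.support, ((coeff a P : ℚ) : F) * ∏ i, x i ^ a i := by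
          conv_lhs => rw [P.as_sum]
          rw [map_sum]
          exact Finset.sum_congr rfl fun a _ => hmonom a _
        have e2 : δ ((aeval x) P)
            = ∑ a ∈ P.support, ((lam a : ℚ) : F) * ((coeff a P : ℚ) : F) * ∏ i, x i ^ a i := by
          rw [e3, map_sum]
          refine Finset.sum_congr rfl fun a _ => ?_
          rw [map_mul, hdel, map_ratCast]
          ring
        have e1 : (aeval x) Q
            = ∑ a ∈ P.support, (((lam a - lam a₀ : ℚ)) : F) * ((coeff a P : ℚ) : F)
              * ∏ i, x i ^ a i := by
          rw [hQ, map_sum]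
          refine Finset.sum_congr rfl fun a _ => ?_
          rw [hmonom]
          push_cast
          ring
        have hQaeval : (aeval x) Q = 0 := by
          have hcalc : (aeval x) Q = δ ((aeval x) P) - ((lam a₀ : ℚ) : F) * (aeval x) P := by
            rw [e1, e2]
            conv_rhs => rw [e3]
            rw [Finset.mul_sum, ← Finset.sum_sub_distrib]
            refine Finset.sum_congr rfl fun a _ => ?_
            push_cast
            ring
          rw [hcalc, h0, map_zero, mul_zero, sub_zero]
        have hQne : Q ≠ 0 := by
          intro h
          have hz : coeff a₁ Q = 0 := by rw [h]; simp
          rw [hQcoeff, if_pos ha₁] at hz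
          rcases mul_eq_zero.1 hz with h' | h'
          · exact (sub_ne_zero.2 fun hl => hne01 (hlaminj _ _ hl)) h'
          · exact (MvPolynomial.mem_support_iff.1 ha₁) h'
        exact hQne (ih Q hQcard hQaeval)
  exact hP₀ne (key _ P₀ le_rfl hP₀0)
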